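/- In a braided quantum group, the identity (ε⊗id) = (id⊗εm)(σ⊗id)(id⊗φ) holds; equivalently, for all a,b ∈ A: a·ε(b) = (ε⊗id)(a⁽¹⁾σ(a⁽²⁾⊗b)), where φ(a) = a⁽¹⁾⊗a⁽²⁾ in Sweedler notation. -/

import Mathlib

open TensorProduct LinearMap

noncomputable section

variable (A : Type*) [Ring A] [Algebra ℂ A]

/-- Two-fold tensor product of `A` with itself. -/
abbrev T2 := A ⊗[ℂ] A
/-- Three-fold tensor product (right associated). -/
abbrev T3 := A ⊗[ℂ] (A ⊗[ℂ] A)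
/-- Four-fold tensor product (right associated). -/
abbrev T4 := A ⊗[ℂ] (A ⊗[ℂ] (A ⊗[ℂ] A))

variable {A}

/-- The multiplication of `A` as a linear map. -/
def mA : T2 A →ₗ[ℂ] A := LinearMap.mul' ℂ A

/-- `f ⊗ id` : a map of `T2` acting on the factors 1,2 of `T3`. -/
def op12 (f : T2 A →ₗ[ℂ] T2 A) : T3 A →ₗ[ℂ] T3 A :=
  (TensorProduct.assoc ℂ A A A).toLinearMap ∘ₗ f.rTensor A ∘ₗ
    (TensorProduct.assoc ℂ A A A).symm.toLinearMap

/-- `id ⊗ f` : a map of `T2` acting on the factors 2,3 of `T3`. -/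
def op23 (f : T2 A →ₗ[ℂ] T2 A) : T3 A →ₗ[ℂ] T3 A := f.lTensor A

/-- `f ⊗ id ⊗ id` : a map of `T2` acting on the factors 1,2 of `T4`. -/
def op12_4 (f : T2 A →ₗ[ℂ] T2 A) : T4 A →ₗ[ℂ] T4 A :=
  (TensorProduct.assoc ℂ A A (T2 A)).toLinearMap ∘ₗ f.rTensor (T2 A) ∘ₗ
    (TensorProduct.assoc ℂ A A (T2 A)).symm.toLinearMap

/-- `id ⊗ f ⊗ id` : a map of `T2` acting on the factors 2,3 of `T4`. -/
def op23_4 (f : T2 A →ₗ[ℂ] T2 A) : T4 A →ₗ[ℂ] T4 A := (op12 f).lTensor A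

/-- `id ⊗ id ⊗ f` : a map of `T2` acting on the factors 3,4 of `T4`. -/
def op34_4 (f : T2 A →ₗ[ℂ] T2 A) : T4 A →ₗ[ℂ] T4 A := (f.lTensor A).lTensor A

/-- `m ⊗ id : T3 → T2`. -/
def m12 : T3 A →ₗ[ℂ] T2 A :=
  (mA (A := A)).rTensor A ∘ₗ (TensorProduct.assoc ℂ A A A).symm.toLinearMap

/-- `id ⊗ m : T3 → T2`. -/
def m23 : T3 A →ₗ[ℂ] T2 A := (mA (A := A)).lTensor A

/-- `m ⊗ m : T4 → T2`. -/
def mm : T4 A →ₗ[ℂ] T2 A := m12 ∘ₗ ((mA (A := A)).lTensor A).lTensor A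

/-- A braided quantum group structure on the algebra `A` (Đurđević).
`φ` is the coproduct, `ε` the counit, `κ` the antipode, `σ` the braiding
(with given inverse `σ'`). -/
structure BQG (A : Type*) [Ring A] [Algebra ℂ A] where
  φ : A →ₗ[ℂ] T2 A
  ε : A →ₗ[ℂ] ℂ
  κ : A →ₗ[ℂ] A
  σ : T2 A →ₗ[ℂ] T2 A
  σ' : T2 A →ₗ[ℂ] T2 A
  σ_comp : σ ∘ₗ σ' = LinearMap.id
  comp_σ : σ' ∘ₗ σ = LinearMap.id
  κ_bij : Function.Bijective κ
  /-- coassociativity `(φ⊗id)φ = (id⊗φ)φ` -/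
  coassoc : (TensorProduct.assoc ℂ A A A).toLinearMap ∘ₗ φ.rTensor A ∘ₗ φ = φ.lTensor A ∘ₗ φ
  /-- `(ε⊗id)φ = id` -/
  counit_left : (TensorProduct.lid ℂ A).toLinearMap ∘ₗ ε.rTensor A ∘ₗ φ = LinearMap.id
  /-- `(id⊗ε)φ = id` -/
  counit_right : (TensorProduct.rid ℂ A).toLinearMap ∘ₗ ε.lTensor A ∘ₗ φ = LinearMap.id
  /-- `σ(m⊗id) = (id⊗m)(σ⊗id)(id⊗σ)` -/
  braid_mul_left : σ ∘ₗ m12 = m23 ∘ₗ op12 σ ∘ₗ op23 σ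
  /-- `σ(id⊗m) = (m⊗id)(id⊗σ)(σ⊗id)` -/
  braid_mul_right : σ ∘ₗ m23 = m12 ∘ₗ op23 σ ∘ₗ op12 σ
  /-- `φm = (m⊗m)(id⊗σ⊗id)(φ⊗φ)` -/
  comul_mul : φ ∘ₗ mA = mm ∘ₗ op23_4 σ ∘ₗ
      (TensorProduct.assoc ℂ A A (T2 A)).toLinearMap ∘ₗ φ.rTensor (T2 A) ∘ₗ φ.lTensor A
  /-- `(σ⊗id²)(id⊗φ⊗id)(σ⁻¹⊗id)(id⊗φ) = (id²⊗σ)(id⊗φ⊗id)(id⊗σ⁻¹)(φ⊗id)` -/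
  mixed_coassoc :
    op12_4 σ ∘ₗ ((TensorProduct.assoc ℂ A A A).toLinearMap ∘ₗ φ.rTensor A).lTensor A ∘ₗ
        op12 σ' ∘ₗ φ.lTensor A
      = op34_4 σ ∘ₗ ((TensorProduct.assoc ℂ A A A).toLinearMap ∘ₗ φ.rTensor A).lTensor A ∘ₗ
        op23 σ' ∘ₗ (TensorProduct.assoc ℂ A A A).toLinearMap ∘ₗ φ.rTensor A
  /-- `m(κ⊗id)φ = 1ε` -/
  antipode_left : mA ∘ₗ κ.rTensor A ∘ₗ φ = Algebra.linearMap ℂ A ∘ₗ ε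
  /-- `m(id⊗κ)φ = 1ε` -/
  antipode_right : mA ∘ₗ κ.lTensor A ∘ₗ φ = Algebra.linearMap ℂ A ∘ₗ ε

namespace BQG

variable {A : Type*} [Ring A] [Algebra ℂ A] (G : BQG A)

/-- `φ ⊗ id : T2 → T3`. -/
def φ1 : T2 A →ₗ[ℂ] T3 A := (TensorProduct.assoc ℂ A A A).toLinearMap ∘ₗ G.φ.rTensor A

/-- `id ⊗ φ : T2 → T3`. -/
def φ2 : T2 A →ₗ[ℂ] T3 A := G.φ.lTensor A

/-- `id² ⊗ ε : T3 → T2`. -/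
def ε3r : T3 A →ₗ[ℂ] T2 A :=
  ((TensorProduct.rid ℂ A).toLinearMap ∘ₗ G.ε.lTensor A).lTensor A

/-- `ε ⊗ id² : T3 → T2`. -/
def ε3l : T3 A →ₗ[ℂ] T2 A :=
  (TensorProduct.lid ℂ (T2 A)).toLinearMap ∘ₗ G.ε.rTensor (T2 A)

/-- The secondary braiding `τ = (id²⊗ε)(id⊗σ⁻¹)(φ⊗id)σ`. -/
def τ : T2 A →ₗ[ℂ] T2 A := G.ε3r ∘ₗ op23 G.σ' ∘ₗ G.φ1 ∘ₗ G.σ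

/-- `ε ⊗ ε : T2 → ℂ`. -/
def εε : T2 A →ₗ[ℂ] ℂ :=
  (TensorProduct.lid ℂ ℂ).toLinearMap ∘ₗ G.ε.rTensor ℂ ∘ₗ G.ε.lTensor A

end BQG

section Aux

variable {A : Type*} [Ring A] [Algebra ℂ A]

/-- The map appearing on the right-hand side of the theorem. -/
def Rmap (G : BQG A) : T2 A →ₗ[ℂ] A :=
  (TensorProduct.rid ℂ A).toLinearMap ∘ₗ (G.ε ∘ₗ mA).lTensor A ∘ₗ
    op12 G.σ ∘ₗ G.φ2

variable (G : BQG A)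

lemma auxS3 (f : T2 A →ₗ[ℂ] A) :
    mA ∘ₗ TensorProduct.map (Algebra.linearMap ℂ A ∘ₗ G.ε) f
      = f ∘ₗ (TensorProduct.lid ℂ (T2 A)).toLinearMap ∘ₗ G.ε.rTensor (T2 A) := by
  apply TensorProduct.ext'
  intro a y
  simp only [LinearMap.comp_apply, TensorProduct.map_tmul, LinearMap.rTensor_tmul,
    LinearEquiv.coe_toLinearMap, TensorProduct.lid_tmul, mA, LinearMap.mul'_apply,
    Algebra.linearMap_apply, map_smul]
  rw [Algebra.smul_def]

lemma auxS4 :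
    (TensorProduct.lid ℂ (T2 A)).toLinearMap ∘ₗ G.ε.rTensor (T2 A) ∘ₗ
        (TensorProduct.assoc ℂ A A A).toLinearMap
      = ((TensorProduct.lid ℂ A).toLinearMap ∘ₗ G.ε.rTensor A).rTensor A := by
  ext x y z
  simp [TensorProduct.smul_tmul]

lemma auxS10 :
    mA ∘ₗ (Algebra.linearMap ℂ A ∘ₗ G.ε).rTensor A
      = (TensorProduct.lid ℂ A).toLinearMap ∘ₗ G.ε.rTensor A := by
  apply TensorProduct.ext'
  intro a b
  simp [mA, Algebra.smul_def]

lemma auxS2 :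
    ((TensorProduct.rid ℂ A).toLinearMap ∘ₗ G.ε.lTensor A) ∘ₗ mm
      = mA ∘ₗ ((TensorProduct.rid ℂ A).toLinearMap.lTensor A) ∘ₗ
          (((G.ε ∘ₗ mA).lTensor A).lTensor A) := by
  ext a x c d
  simp [mA, mm, m12, Algebra.mul_smul_comm]

lemma auxS1 :
    LinearMap.lTensor A (G.φ2) ∘ₗ G.φ1
      = (TensorProduct.assoc ℂ A A (T2 A)).toLinearMap ∘ₗ G.φ.rTensor (T2 A) ∘ₗ
          G.φ.lTensor A := by
  have h := TensorProduct.map_map_comp_assoc_eq (R := ℂ)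
      (LinearMap.id : A →ₗ[ℂ] A) (LinearMap.id : A →ₗ[ℂ] A) G.φ
  show TensorProduct.map LinearMap.id (TensorProduct.map LinearMap.id G.φ) ∘ₗ
      ((TensorProduct.assoc ℂ A A A).toLinearMap ∘ₗ TensorProduct.map G.φ LinearMap.id)
    = (TensorProduct.assoc ℂ A A (T2 A)).toLinearMap ∘ₗ
        TensorProduct.map G.φ LinearMap.id ∘ₗ TensorProduct.map LinearMap.id G.φ
  rw [← LinearMap.comp_assoc, h, TensorProduct.map_id, LinearMap.comp_assoc]
  congr 1
  rw [← TensorProduct.map_comp, ← TensorProduct.map_comp]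
  simp

lemma auxN2 :
    G.φ.rTensor (T2 A) ∘ₗ (TensorProduct.assoc ℂ A A A).toLinearMap
      = (TensorProduct.assoc ℂ (T2 A) A A).toLinearMap ∘ₗ (G.φ.rTensor A).rTensor A := by
  have h := TensorProduct.map_map_comp_assoc_eq (R := ℂ)
      G.φ (LinearMap.id : A →ₗ[ℂ] A) (LinearMap.id : A →ₗ[ℂ] A)
  simp only [TensorProduct.map_id] at h
  exact h

lemma auxN3 :
    (TensorProduct.assoc ℂ A (T2 A) A).toLinearMap ∘ₗ (G.φ.lTensor A).rTensor A
      = (G.φ.rTensor A).lTensor A ∘ₗ (TensorProduct.assoc ℂ A A A).toLinearMap := by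
  have h := TensorProduct.map_map_comp_assoc_eq (R := ℂ)
      (LinearMap.id : A →ₗ[ℂ] A) G.φ (LinearMap.id : A →ₗ[ℂ] A)
  exact h.symm

lemma auxS8 (f : T2 A →ₗ[ℂ] A) :
    mA ∘ₗ f.lTensor A ∘ₗ (mA ∘ₗ G.κ.rTensor A).rTensor (T2 A) ∘ₗ
        (TensorProduct.assoc ℂ (T2 A) A A).toLinearMap ∘ₗ
        ((TensorProduct.assoc ℂ A A A).symm.toLinearMap).rTensor A
      = mA ∘ₗ G.κ.rTensor A ∘ₗ
          (mA ∘ₗ f.lTensor A ∘ₗ (TensorProduct.assoc ℂ A A A).toLinearMap).lTensor A ∘ₗ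
          (TensorProduct.assoc ℂ A (T2 A) A).toLinearMap := by
  ext x y z w
  simp [mA, mul_assoc]

lemma auxS9 :
    mA ∘ₗ G.κ.rTensor A ∘ₗ mA.lTensor A
      = mA ∘ₗ (mA ∘ₗ G.κ.rTensor A).rTensor A ∘ₗ
          (TensorProduct.assoc ℂ A A A).symm.toLinearMap := by
  ext x y z
  simp [mA, mul_assoc]

lemma lem_star : mA ∘ₗ (Rmap G).lTensor A ∘ₗ G.φ1 = mA := by
  apply LinearMap.ext
  intro x
  -- pointwise facts
  have h2 := LinearMap.congr_fun (auxS1 G) x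
  have h4 := LinearMap.congr_fun G.comul_mul x
  have h5 := LinearMap.congr_fun G.counit_right (mA x)
  have h3 := LinearMap.congr_fun (auxS2 G)
      ((op12 G.σ).lTensor A ((TensorProduct.assoc ℂ A A (T2 A)).toLinearMap
        (G.φ.rTensor (T2 A) (G.φ.lTensor A x))))
  simp only [LinearMap.comp_apply, op23_4] at h2 h3 h4 h5 ⊢
  simp only [Rmap, LinearMap.lTensor_comp, LinearMap.comp_apply]
  simp only [LinearMap.lTensor_comp, LinearMap.comp_apply] at h3
  rw [h2, ← h3, ← h4]
  exact h5

-- `(φ ⊗ id)φ = α⁻¹ (id ⊗ φ)φ`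
lemma coassoc' :
    G.φ.rTensor A ∘ₗ G.φ
      = (TensorProduct.assoc ℂ A A A).symm.toLinearMap ∘ₗ (G.φ.lTensor A ∘ₗ G.φ) := by
  rw [← G.coassoc]
  apply LinearMap.ext
  intro a
  simp only [LinearMap.comp_apply]
  simp

theorem bqg_counit_sigma_left' :
    (TensorProduct.lid ℂ A).toLinearMap ∘ₗ G.ε.rTensor A = Rmap G := by
  have hstar : (mA ∘ₗ ((Rmap G).lTensor A ∘ₗ (TensorProduct.assoc ℂ A A A).toLinearMap))
      ∘ₗ G.φ.rTensor A = mA := by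
    have := lem_star G
    simp only [BQG.φ1] at this
    simpa [LinearMap.comp_assoc] using this
  apply LinearMap.ext
  intro x
  simp only [LinearMap.comp_apply]
  -- Step C1: Rmap G x = mA (map u (Rmap G) (α (φ.rTensor x)))
  have a1 := LinearMap.congr_fun (auxS3 G (Rmap G))
      ((TensorProduct.assoc ℂ A A A).toLinearMap (G.φ.rTensor A x))
  have a2 := LinearMap.congr_fun (auxS4 G) (G.φ.rTensor A x)
  simp only [LinearMap.comp_apply] at a1 a2
  have a3 : (((TensorProduct.lid ℂ A).toLinearMap ∘ₗ G.ε.rTensor A).rTensor A)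
      (G.φ.rTensor A x) = x := by
    rw [← LinearMap.rTensor_comp_apply, LinearMap.comp_assoc, G.counit_left,
      LinearMap.rTensor_id, LinearMap.id_apply]
  have C1 : Rmap G x
      = mA (TensorProduct.map (Algebra.linearMap ℂ A ∘ₗ G.ε) (Rmap G)
          ((TensorProduct.assoc ℂ A A A).toLinearMap (G.φ.rTensor A x))) := by
    rw [a1, a2, a3]
  -- replace the counit term by the antipode expression
  have hu : Algebra.linearMap ℂ A ∘ₗ G.ε = (mA ∘ₗ G.κ.rTensor A) ∘ₗ G.φ := by
    rw [LinearMap.comp_assoc, G.antipode_left]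
  rw [hu] at C1
  -- split the map
  have g2 := LinearMap.congr_fun
      (TensorProduct.map_comp (mA ∘ₗ G.κ.rTensor A) LinearMap.id G.φ (Rmap G))
      ((TensorProduct.assoc ℂ A A A).toLinearMap (G.φ.rTensor A x))
  rw [LinearMap.id_comp] at g2
  rw [g2, LinearMap.comp_apply] at C1
  -- φ on factor 1, R on factor 2: factor through rTensor/lTensor
  have g3 := LinearMap.congr_fun
      (LinearMap.lTensor_comp_rTensor A G.φ (Rmap G)).symm
      ((TensorProduct.assoc ℂ A A A).toLinearMap (G.φ.rTensor A x))
  rw [g3, LinearMap.comp_apply] at C1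
  -- naturality of the associator
  have g4 := LinearMap.congr_fun (auxN2 G) (G.φ.rTensor A x)
  simp only [LinearMap.comp_apply] at g4
  rw [g4] at C1
  -- coassociativity
  have g5 : (G.φ.rTensor A).rTensor A (G.φ.rTensor A x)
      = ((TensorProduct.assoc ℂ A A A).symm.toLinearMap).rTensor A
          (((G.φ.lTensor A).rTensor A) (G.φ.rTensor A x)) := by
    rw [← LinearMap.rTensor_comp_apply, coassoc' G, LinearMap.rTensor_comp,
      LinearMap.rTensor_comp]
    rfl
  rw [g5] at C1
  -- commute R to the other side of K
  have g7a := LinearMap.congr_fun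
      (LinearMap.map_comp_lTensor (T2 A) (mA ∘ₗ G.κ.rTensor A) (LinearMap.id : A →ₗ[ℂ] A)
        (Rmap G))
      ((TensorProduct.assoc ℂ (T2 A) A A).toLinearMap
        ((((TensorProduct.assoc ℂ A A A).symm.toLinearMap).rTensor A)
          (((G.φ.lTensor A).rTensor A) (G.φ.rTensor A x))))
  rw [LinearMap.id_comp] at g7a
  have g7b := LinearMap.congr_fun
      (LinearMap.lTensor_comp_rTensor (T2 A) (mA ∘ₗ G.κ.rTensor A) (Rmap G))
      ((TensorProduct.assoc ℂ (T2 A) A A).toLinearMap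
        ((((TensorProduct.assoc ℂ A A A).symm.toLinearMap).rTensor A)
          (((G.φ.lTensor A).rTensor A) (G.φ.rTensor A x))))
  rw [LinearMap.comp_apply] at g7a
  rw [LinearMap.comp_apply] at g7b
  rw [g7a, ← g7b] at C1
  -- apply the S8 multiplication-associativity lemma
  have g8 := LinearMap.congr_fun (auxS8 G (Rmap G))
      (((G.φ.lTensor A).rTensor A) (G.φ.rTensor A x))
  simp only [LinearMap.comp_apply] at g8
  rw [g8] at C1
  -- naturality of the associator (other side)
  have g9 := LinearMap.congr_fun (auxN3 G) (G.φ.rTensor A x)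
  simp only [LinearMap.comp_apply] at g9
  rw [g9] at C1
  -- collapse the inner composite with lem_star
  have g10 := LinearMap.congr_fun
      (LinearMap.lTensor_comp A
        (mA ∘ₗ (Rmap G).lTensor A ∘ₗ (TensorProduct.assoc ℂ A A A).toLinearMap)
        (G.φ.rTensor A)).symm
      ((TensorProduct.assoc ℂ A A A).toLinearMap (G.φ.rTensor A x))
  rw [LinearMap.comp_apply] at g10
  rw [g10] at C1
  have hXY : (mA ∘ₗ (Rmap G).lTensor A ∘ₗ (TensorProduct.assoc ℂ A A A).toLinearMap)
      ∘ₗ G.φ.rTensor A = mA := by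
    simpa [LinearMap.comp_assoc] using hstar
  rw [hXY] at C1
  -- regroup multiplications
  have g11 := LinearMap.congr_fun (auxS9 G)
      ((TensorProduct.assoc ℂ A A A).toLinearMap (G.φ.rTensor A x))
  simp only [LinearMap.comp_apply] at g11
  rw [g11] at C1
  rw [show ((TensorProduct.assoc ℂ A A A).symm.toLinearMap)
        ((TensorProduct.assoc ℂ A A A).toLinearMap (G.φ.rTensor A x))
      = G.φ.rTensor A x by
    simp only [LinearEquiv.coe_toLinearMap]
    exact (TensorProduct.assoc ℂ A A A).symm_apply_apply _] at C1
  rw [← LinearMap.rTensor_comp_apply] at C1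
  rw [show (mA ∘ₗ G.κ.rTensor A) ∘ₗ G.φ = Algebra.linearMap ℂ A ∘ₗ G.ε from
    hu.symm] at C1
  have g12 := LinearMap.congr_fun (auxS10 G) x
  simp only [LinearMap.comp_apply] at g12
  rw [g12] at C1
  exact C1.symm

end Aux

/-- `(ε⊗id) = (id⊗εm)(σ⊗id)(id⊗φ)`. -/
theorem bqg_counit_sigma_left {A : Type*} [Ring A] [Algebra ℂ A] (G : BQG A) :
    (TensorProduct.lid ℂ A).toLinearMap ∘ₗ G.ε.rTensor A
      = (TensorProduct.rid ℂ A).toLinearMap ∘ₗ (G.ε ∘ₗ mA).lTensor A ∘ₗ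
        op12 G.σ ∘ₗ G.φ2 := bqg_counit_sigma_left' G
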